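/- arXiv:1608.08490 — 5 statements merged into one kernel-verified Lean document; each statement's English description precedes it below -/
import Mathlib

section
/- For c < 0 and a random variable Y with continuous CDF, the CPT value satisfies U(cY) = (-c)^{\alpha} U(-Y). -/
open MeasureTheory Set

/-- Cumulative distribution function of a random variable `X` under `μ`. -/
noncomputable def cdf {Ω : Type*} [MeasurableSpace Ω] (μ : Measure Ω) (X : Ω → ℝ) (x : ℝ) : ℝ :=
  (μ {ω | X ω ≤ x}).toReal

/-- The CPT functional. -/
noncomputable def cptU {Ω : Type*} [MeasurableSpace Ω] (μ : Measure Ω)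
    (Tp Tm : ℝ → ℝ) (α lam : ℝ) (X : Ω → ℝ) : ℝ :=
  (∫ x in Ioi (0:ℝ), Tp (1 - cdf μ X x) * (α * x ^ (α - 1))) -
  ∫ x in Ioi (0:ℝ), Tm (cdf μ X (-x)) * (lam * (α * x ^ (α - 1)))


lemma cdf_c_eq {Ω : Type*} [MeasurableSpace Ω] (μ : Measure Ω) (Y : Ω → ℝ)
    {c : ℝ} (hc : c < 0) (x : ℝ) :
    cdf μ (fun ω => c * Y ω) x = cdf μ (fun ω => -Y ω) (x / (-c)) := by
  unfold cdf
  have hset : {ω | c * Y ω ≤ x} = {ω | -Y ω ≤ x / (-c)} := by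
    ext ω
    simp only [mem_setOf_eq]
    rw [le_div_iff₀ (neg_pos.mpr hc), neg_mul_neg, mul_comm]
  rw [hset]

lemma key_integral (f : ℝ → ℝ) {k α : ℝ} (hk : 0 < k) :
    ∫ x in Ioi (0:ℝ), f (x / k) * (α * x ^ (α - 1)) =
      k ^ α * ∫ x in Ioi (0:ℝ), f x * (α * x ^ (α - 1)) := by
  have h := MeasureTheory.integral_comp_mul_left_Ioi
    (fun x => f (x / k) * (α * x ^ (α - 1))) 0 hk
  simp only [mul_zero] at h
  have h2 : ∫ x in Ioi (0:ℝ), f (k * x / k) * (α * (k * x) ^ (α - 1)) =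
      ∫ x in Ioi (0:ℝ), k ^ (α - 1) * (f x * (α * x ^ (α - 1))) := by
    apply setIntegral_congr_fun measurableSet_Ioi
    intro x hx
    have hx' : (0:ℝ) < x := hx
    dsimp only
    rw [mul_div_cancel_left₀ _ (ne_of_gt hk), Real.mul_rpow hk.le hx'.le]
    ring
  rw [h2, integral_const_mul] at h
  have h3 : (∫ x in Ioi (0:ℝ), f (x / k) * (α * x ^ (α - 1))) =
      k * (k ^ (α - 1) * ∫ x in Ioi (0:ℝ), f x * (α * x ^ (α - 1))) := by
    rw [h, smul_eq_mul, ← mul_assoc, mul_inv_cancel₀ hk.ne', one_mul]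
  have hp : k ^ α = k * k ^ (α - 1) := by
    have hq := Real.rpow_add hk 1 (α - 1)
    rw [Real.rpow_one, show (1:ℝ) + (α - 1) = α by ring] at hq
    exact hq
  rw [h3, hp]
  ring

/-- For `c < 0` and `Y` with continuous CDF, `U(cY) = (-c)^α U(-Y)`. -/
theorem cptU_smul_neg {Ω : Type*} [MeasurableSpace Ω] (μ : Measure Ω)
    [IsProbabilityMeasure μ] (Tp Tm : ℝ → ℝ) (α lam : ℝ)
    (hα : 0 < α) (hα1 : α < 1) (hlam : 1 < lam)
    (hT0p : Tp 0 = 0) (hT1p : Tp 1 = 1) (hT0m : Tm 0 = 0) (hT1m : Tm 1 = 1)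
    (Y : Ω → ℝ) (hcont : Continuous (cdf μ Y)) (c : ℝ) (hc : c < 0)
    (h1 : IntegrableOn (fun x => Tp (1 - cdf μ (fun ω => -Y ω) x) * (α * x ^ (α - 1))) (Ioi 0))
    (h2 : IntegrableOn
      (fun x => Tm (cdf μ (fun ω => -Y ω) (-x)) * (lam * (α * x ^ (α - 1)))) (Ioi 0))
    (h3 : IntegrableOn
      (fun x => Tp (1 - cdf μ (fun ω => c * Y ω) x) * (α * x ^ (α - 1))) (Ioi 0))
    (h4 : IntegrableOn
      (fun x => Tm (cdf μ (fun ω => c * Y ω) (-x)) * (lam * (α * x ^ (α - 1)))) (Ioi 0)) :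
    cptU μ Tp Tm α lam (fun ω => c * Y ω) = (-c) ^ α * cptU μ Tp Tm α lam (fun ω => -Y ω) := by
  have hk : (0:ℝ) < -c := neg_pos.mpr hc
  unfold cptU
  have e1 : ∀ x : ℝ, Tp (1 - cdf μ (fun ω => c * Y ω) x) * (α * x ^ (α - 1)) =
      Tp (1 - cdf μ (fun ω => -Y ω) (x / (-c))) * (α * x ^ (α - 1)) := by
    intro x; rw [cdf_c_eq μ Y hc]
  have e2 : ∀ x : ℝ, Tm (cdf μ (fun ω => c * Y ω) (-x)) * (lam * (α * x ^ (α - 1))) =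
      Tm (cdf μ (fun ω => -Y ω) (-(x / (-c)))) * lam * (α * x ^ (α - 1)) := by
    intro x; rw [cdf_c_eq μ Y hc, neg_div]; ring
  simp only [e1, e2]
  have k1 := key_integral (fun y => Tp (1 - cdf μ (fun ω => -Y ω) y)) (α := α) hk
  have k2 := key_integral (fun y => Tm (cdf μ (fun ω => -Y ω) (-y)) * lam) (α := α) hk
  rw [k1, k2]
  have e3 : ∀ x : ℝ, Tm (cdf μ (fun ω => -Y ω) (-x)) * lam * (α * x ^ (α - 1)) =
      Tm (cdf μ (fun ω => -Y ω) (-x)) * (lam * (α * x ^ (α - 1))) := fun x => by ring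
  simp only [e3]
  ring
end

section
/- Single-period optimal value (Proposition 1): with admissible set A|W| \le v \le B|W| (A \le 0 < B) and terminal benchmarked wealth v\,y, the maximal CPT value equals W^{\alpha} A_* if W \ge 0 and -(-W)^{\alpha} B_* if W < 0, where A_* = \max_{z \in [A,B]} g(z), B_* = -\max_{z \in [-B,-A]} l(z), with g(z) = z^{\alpha} k \cdot 1_{z \in [0,B]} + (-z)^{\alpha} h \cdot 1_{z \in [A,0]}, l(z) = (-z)^{\alpha} k \cdot 1_{z \in [-B,0]} + z^{\alpha} h \cdot 1_{z \in [0,-A]}, k = U(y), h = U(-y). -/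
open MeasureTheory Set

/-- `g(z) = z^α k 1_{z∈[0,B]} + (-z)^α h 1_{z∈[A,0]}`. -/
noncomputable def gfun (α k h A B : ℝ) (z : ℝ) : ℝ :=
  (if z ∈ Icc (0:ℝ) B then z ^ α * k else 0) + (if z ∈ Icc A 0 then (-z) ^ α * h else 0)

/-- `l(z) = (-z)^α k 1_{z∈[-B,0]} + z^α h 1_{z∈[0,-A]}`. -/
noncomputable def lfun (α k h A B : ℝ) (z : ℝ) : ℝ :=
  (if z ∈ Icc (-B) (0:ℝ) then (-z) ^ α * k else 0) + (if z ∈ Icc 0 (-A) then z ^ α * h else 0)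

section Aux

variable {Ω : Type*} [MeasurableSpace Ω] (μ : Measure Ω) [IsProbabilityMeasure μ]
variable (Tp Tm : ℝ → ℝ) (α lam : ℝ)

/-- The CPT value of the zero position is zero. -/
lemma cptU_zero_fun (hα : α ≠ 0) (hT0p : Tp 0 = 0) (hT0m : Tm 0 = 0) :
    cptU μ Tp Tm α lam (fun _ => (0:ℝ)) = 0 := by
  unfold cptU
  have h1 : ∀ x ∈ Ioi (0:ℝ),
      Tp (1 - cdf μ (fun _ => (0:ℝ)) x) * (α * x ^ (α - 1)) = 0 := by
    intro x hx
    have hc : cdf μ (fun _ : Ω => (0:ℝ)) x = 1 := by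
      unfold cdf
      have : {ω : Ω | (0:ℝ) ≤ x} = univ := eq_univ_of_forall fun ω => (le_of_lt hx : (0:ℝ) ≤ x)
      rw [this, measure_univ, ENNReal.toReal_one]
    rw [hc, sub_self, hT0p, zero_mul]
  have h2 : ∀ x ∈ Ioi (0:ℝ),
      Tm (cdf μ (fun _ => (0:ℝ)) (-x)) * (lam * (α * x ^ (α - 1))) = 0 := by
    intro x hx
    have hc : cdf μ (fun _ : Ω => (0:ℝ)) (-x) = 0 := by
      unfold cdf
      have : {ω : Ω | (0:ℝ) ≤ -x} = ∅ := by
        apply eq_empty_of_forall_notMem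
        intro ω hω
        simp only [mem_setOf_eq] at hω
        have : (0:ℝ) < x := hx
        linarith
      rw [this, measure_empty, ENNReal.toReal_zero]
    rw [hc, hT0m, zero_mul]
  rw [setIntegral_congr_fun measurableSet_Ioi h1,
    setIntegral_congr_fun measurableSet_Ioi h2, integral_zero, sub_self]

/-- Change of variables: scaling the integration variable. -/
lemma scale_integral (φ : ℝ → ℝ) {c : ℝ} (hc : 0 < c) :
    ∫ x in Ioi (0:ℝ), φ (c⁻¹ * x) * x ^ (α - 1)
      = c ^ α * ∫ t in Ioi (0:ℝ), φ t * t ^ (α - 1) := by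
  have hpow : c ^ (α - 1) * c⁻¹ ^ (α - 1) = 1 := by
    rw [← Real.mul_rpow hc.le (inv_nonneg.2 hc.le), mul_inv_cancel₀ hc.ne', Real.one_rpow]
  have h1 : ∀ x ∈ Ioi (0:ℝ), φ (c⁻¹ * x) * x ^ (α - 1)
      = c ^ (α - 1) * ((fun t => φ t * t ^ (α - 1)) (c⁻¹ * x)) := by
    intro x hx
    have hx0 : (0:ℝ) < x := hx
    simp only []
    rw [Real.mul_rpow (inv_nonneg.2 hc.le) hx0.le]
    calc φ (c⁻¹ * x) * x ^ (α - 1)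
        = (c ^ (α - 1) * c⁻¹ ^ (α - 1)) * (φ (c⁻¹ * x) * x ^ (α - 1)) := by
          rw [hpow, one_mul]
      _ = c ^ (α - 1) * (φ (c⁻¹ * x) * (c⁻¹ ^ (α - 1) * x ^ (α - 1))) := by ring
  rw [setIntegral_congr_fun measurableSet_Ioi h1, integral_const_mul,
    integral_comp_mul_left_Ioi (fun t => φ t * t ^ (α - 1)) 0 (inv_pos.2 hc),
    mul_zero, inv_inv, smul_eq_mul]
  rw [← mul_assoc]
  congr 1
  rw [Real.rpow_sub_one hc.ne']
  field_simp

/-- Positive scaling: `U(cX) = c^α U(X)` for `c > 0`. -/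
lemma cptU_pos_smul (X : Ω → ℝ) {c : ℝ} (hc : 0 < c) :
    cptU μ Tp Tm α lam (fun ω => c * X ω) = c ^ α * cptU μ Tp Tm α lam X := by
  have hcdf : ∀ x : ℝ, cdf μ (fun ω => c * X ω) x = cdf μ X (c⁻¹ * x) := by
    intro x
    unfold cdf
    have hset : {ω | c * X ω ≤ x} = {ω | X ω ≤ c⁻¹ * x} := by
      ext ω
      simp only [mem_setOf_eq]
      rw [mul_comm c, ← le_div_iff₀ hc, div_eq_inv_mul]
    rw [hset]
  unfold cptU
  have e1 : ∀ x ∈ Ioi (0:ℝ),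
      Tp (1 - cdf μ (fun ω => c * X ω) x) * (α * x ^ (α - 1))
        = α * ((fun t => Tp (1 - cdf μ X t)) (c⁻¹ * x) * x ^ (α - 1)) := by
    intro x _
    rw [hcdf x]; ring
  have e2 : ∀ x ∈ Ioi (0:ℝ),
      Tm (cdf μ (fun ω => c * X ω) (-x)) * (lam * (α * x ^ (α - 1)))
        = (lam * α) * ((fun t => Tm (cdf μ X (-t))) (c⁻¹ * x) * x ^ (α - 1)) := by
    intro x _
    rw [hcdf (-x)]
    simp only [mul_neg, neg_mul]
    ring_nf
  have e3 : ∀ x ∈ Ioi (0:ℝ),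
      Tp (1 - cdf μ X x) * (α * x ^ (α - 1))
        = α * ((fun t => Tp (1 - cdf μ X t)) x * x ^ (α - 1)) := by
    intro x _; ring
  have e4 : ∀ x ∈ Ioi (0:ℝ),
      Tm (cdf μ X (-x)) * (lam * (α * x ^ (α - 1)))
        = (lam * α) * ((fun t => Tm (cdf μ X (-t))) x * x ^ (α - 1)) := by
    intro x _; ring
  rw [setIntegral_congr_fun measurableSet_Ioi e1, setIntegral_congr_fun measurableSet_Ioi e2,
    setIntegral_congr_fun measurableSet_Ioi e3, setIntegral_congr_fun measurableSet_Ioi e4,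
    integral_const_mul, integral_const_mul, integral_const_mul, integral_const_mul]
  simp only [scale_integral α (fun t => Tp (1 - cdf μ X t)) hc,
    scale_integral α (fun t => Tm (cdf μ X (-t))) hc]
  ring

end Aux

/-- Single-period optimal CPT value (Proposition 1): the maximal CPT value over admissible
strategies `A|W| ≤ v ≤ B|W|` equals `W^α A_*` if `W ≥ 0` and `-(-W)^α B_*` if `W < 0`,
where `A_* = max g` on `[A,B]` and `B_* = - max l` on `[-B,-A]`, `k = U(y)`, `h = U(-y)`. -/
theorem single_period_optimal_value {Ω : Type*} [MeasurableSpace Ω] (μ : Measure Ω)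
    [IsProbabilityMeasure μ] (Tp Tm : ℝ → ℝ) (α lam : ℝ)
    (hα : 0 < α) (hα1 : α < 1) (hlam : 1 < lam)
    (hT0p : Tp 0 = 0) (hT1p : Tp 1 = 1) (hT0m : Tm 0 = 0) (hT1m : Tm 1 = 1)
    (y : Ω → ℝ) (hmeas : Measurable y) (hcont : Continuous (cdf μ y))
    (hint1 : ∀ v : ℝ, IntegrableOn
      (fun x => Tp (1 - cdf μ (fun ω => v * y ω) x) * (α * x ^ (α - 1))) (Ioi 0))
    (hint2 : ∀ v : ℝ, IntegrableOn
      (fun x => Tm (cdf μ (fun ω => v * y ω) (-x)) * (lam * (α * x ^ (α - 1)))) (Ioi 0))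
    (A B W : ℝ) (hA : A ≤ 0) (hB : 0 < B) :
    IsGreatest
      {u : ℝ | ∃ v : ℝ, A * |W| ≤ v ∧ v ≤ B * |W| ∧ u = cptU μ Tp Tm α lam (fun ω => v * y ω)}
      (if 0 ≤ W then
          W ^ α * sSup (gfun α (cptU μ Tp Tm α lam y) (cptU μ Tp Tm α lam (fun ω => -y ω)) A B ''
            Icc A B)
        else
          -((-W) ^ α *
            -sSup (lfun α (cptU μ Tp Tm α lam y) (cptU μ Tp Tm α lam (fun ω => -y ω)) A B ''
              Icc (-B) (-A)))) := by
  set k := cptU μ Tp Tm α lam y with hk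
  set h := cptU μ Tp Tm α lam (fun ω => -y ω) with hh
  -- Value of any admissible position parametrized by `c ∈ [A, B]`
  have hval : ∀ c ∈ Icc A B,
      cptU μ Tp Tm α lam (fun ω => (c * |W|) * y ω) = |W| ^ α * gfun α k h A B c := by
    intro c hc
    by_cases hW0 : |W| = 0
    · have hfun : (fun ω => (c * |W|) * y ω) = fun _ : Ω => (0:ℝ) := by
        funext ω; rw [hW0]; ring
      rw [hfun, cptU_zero_fun μ Tp Tm α lam hα.ne' hT0p hT0m, hW0,
        Real.zero_rpow hα.ne', zero_mul]
    · have hw : 0 < |W| := (abs_nonneg W).lt_of_ne' hW0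
      rcases lt_trichotomy c 0 with hc0 | hc0 | hc0
      · -- negative leverage
        have hfun : (fun ω => (c * |W|) * y ω) = fun ω => ((-c) * |W|) * (-y ω) := by
          funext ω; ring
        have hpos : 0 < (-c) * |W| := mul_pos (by linarith) hw
        rw [hfun, cptU_pos_smul μ Tp Tm α lam (fun ω => -y ω) hpos, ← hh]
        have hg : gfun α k h A B c = (-c) ^ α * h := by
          unfold gfun
          rw [if_neg (by simp [mem_Icc]; intro h0; linarith),
            if_pos (by exact ⟨hc.1, hc0.le⟩)]
          ring
        rw [hg, Real.mul_rpow (by linarith) hw.le]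
        ring
      · -- zero leverage
        have hfun : (fun ω => (c * |W|) * y ω) = fun _ : Ω => (0:ℝ) := by
          funext ω; rw [hc0]; ring
        have hg : gfun α k h A B c = 0 := by
          unfold gfun
          rw [hc0]
          rw [if_pos (by exact ⟨le_refl 0, hB.le⟩), if_pos (by exact ⟨hA, le_refl 0⟩)]
          rw [neg_zero, Real.zero_rpow hα.ne']
          ring
        rw [hfun, cptU_zero_fun μ Tp Tm α lam hα.ne' hT0p hT0m, hg, mul_zero]
      · -- positive leverage
        have hpos : 0 < c * |W| := mul_pos hc0 hw
        rw [cptU_pos_smul μ Tp Tm α lam y hpos, ← hk]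
        have hg : gfun α k h A B c = c ^ α * k := by
          unfold gfun
          rw [if_pos (by exact ⟨hc0.le, hc.2⟩),
            if_neg (by simp [mem_Icc]; intro h0; linarith)]
          ring
        rw [hg, Real.mul_rpow hc0.le hw.le]
        ring
  -- `gfun` attains its maximum on the compact interval `[A, B]`
  have hFcont : Continuous (fun z : ℝ => (max z 0) ^ α * k + (max (-z) 0) ^ α * h) := by
    apply Continuous.add
    · exact ((continuous_id.max continuous_const).rpow_const
        (fun x => Or.inr hα.le)).mul continuous_const
    · exact ((continuous_neg.max continuous_const).rpow_const
        (fun x => Or.inr hα.le)).mul continuous_const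
  have hEq : EqOn (gfun α k h A B)
      (fun z : ℝ => (max z 0) ^ α * k + (max (-z) 0) ^ α * h) (Icc A B) := by
    intro z hz
    unfold gfun
    simp only []
    rcases lt_trichotomy z 0 with h0 | h0 | h0
    · rw [if_neg (by simp [mem_Icc]; intro h1; linarith),
        if_pos (by exact ⟨hz.1, h0.le⟩),
        max_eq_right (by linarith : z ≤ (0:ℝ)), max_eq_left (by linarith : (0:ℝ) ≤ -z),
        Real.zero_rpow hα.ne']
      ring
    · subst h0
      rw [if_pos (by exact ⟨le_refl 0, hB.le⟩), if_pos (by exact ⟨hA, le_refl 0⟩)]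
      norm_num
    · rw [if_pos (by exact ⟨h0.le, hz.2⟩),
        if_neg (by simp [mem_Icc]; intro h1; linarith),
        max_eq_left h0.le, max_eq_right (by linarith : -z ≤ (0:ℝ)),
        Real.zero_rpow hα.ne']
      ring
  have hgcont : ContinuousOn (gfun α k h A B) (Icc A B) :=
    hFcont.continuousOn.congr hEq
  have hABne : (0:ℝ) ∈ Icc A B := ⟨hA, hB.le⟩
  have hne : (gfun α k h A B '' Icc A B).Nonempty := ⟨_, ⟨0, hABne, rfl⟩⟩
  have hgreat : IsGreatest (gfun α k h A B '' Icc A B) (sSup (gfun α k h A B '' Icc A B)) :=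
    (isCompact_Icc.image_of_continuousOn hgcont).isGreatest_sSup hne
  set M := sSup (gfun α k h A B '' Icc A B) with hM
  -- The image of `lfun` coincides with that of `gfun`
  have hlg : lfun α k h A B '' Icc (-B) (-A) = gfun α k h A B '' Icc A B := by
    have hlz : ∀ z : ℝ, lfun α k h A B z = gfun α k h A B (-z) := by
      intro z
      unfold lfun gfun
      rw [neg_neg]
      congr 1
      · congr 1
        simp only [mem_Icc, eq_iff_iff]
        constructor
        · rintro ⟨h1, h2⟩; exact ⟨by linarith, by linarith⟩
        · rintro ⟨h1, h2⟩; exact ⟨by linarith, by linarith⟩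
      · congr 1
        simp only [mem_Icc, eq_iff_iff]
        constructor
        · rintro ⟨h1, h2⟩; exact ⟨by linarith, by linarith⟩
        · rintro ⟨h1, h2⟩; exact ⟨by linarith, by linarith⟩
    ext u
    simp only [mem_image]
    constructor
    · rintro ⟨z, hz, rfl⟩
      exact ⟨-z, ⟨by simpa using neg_le_neg hz.2, by simpa using neg_le_neg hz.1⟩,
        by rw [hlz z]⟩
    · rintro ⟨z, hz, rfl⟩
      refine ⟨-z, ⟨by simpa using neg_le_neg hz.2, by simpa using neg_le_neg hz.1⟩, ?_⟩
      rw [hlz (-z), neg_neg]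
  -- the claimed optimal value equals `|W|^α * M`
  have hclaim : (if 0 ≤ W then W ^ α * M
      else -((-W) ^ α * -sSup (lfun α k h A B '' Icc (-B) (-A)))) = |W| ^ α * M := by
    by_cases hW : 0 ≤ W
    · rw [if_pos hW, abs_of_nonneg hW]
    · rw [if_neg hW, hlg, ← hM, mul_neg, neg_neg, abs_of_neg (not_le.1 hW)]
  rw [hclaim]
  constructor
  · -- membership
    obtain ⟨c₀, hc₀, hgc₀⟩ := hgreat.1
    refine ⟨c₀ * |W|, mul_le_mul_of_nonneg_right hc₀.1 (abs_nonneg W),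
      mul_le_mul_of_nonneg_right hc₀.2 (abs_nonneg W), ?_⟩
    rw [hval c₀ hc₀, hgc₀]
  · -- upper bound
    rintro u ⟨v, hv1, hv2, rfl⟩
    by_cases hW0 : |W| = 0
    · have hv0 : v = 0 := by
        rw [hW0, mul_zero] at hv1 hv2
        linarith
      have hfun : (fun ω => v * y ω) = fun ω => ((0:ℝ) * |W|) * y ω := by
        funext ω; rw [hv0]; ring
      rw [hfun, hval 0 hABne]
      exact mul_le_mul_of_nonneg_left (hgreat.2 ⟨0, hABne, rfl⟩)
        (Real.rpow_nonneg (abs_nonneg W) α)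
    · have hw : 0 < |W| := (abs_nonneg W).lt_of_ne' hW0
      set c := v / |W| with hcdef
      have hc : c ∈ Icc A B :=
        ⟨(le_div_iff₀ hw).2 hv1, (div_le_iff₀ hw).2 hv2⟩
      have hvc : v = c * |W| := (div_mul_cancel₀ v hw.ne').symm
      have hfun : (fun ω => v * y ω) = fun ω => (c * |W|) * y ω := by
        funext ω; rw [← hvc]
      rw [hfun, hval c hc]
      exact mul_le_mul_of_nonneg_left (hgreat.2 ⟨c, hc, rfl⟩)
        (Real.rpow_nonneg (abs_nonneg W) α)
end

section
/- In the single-period problem, the optimal investment is proportional to wealth: v^* = k^* W if W \ge 0 and v^* = \hat{k}^* W if W < 0, where k^* = \arg\max_{z \in [A,B]} g(z) and \hat{k}^* = \arg\max_{z \in [-B,-A]} l(z). That is, U(v^* y) \ge U(v\,y) for every admissible v with A|W| \le v \le B|W|. -/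
open MeasureTheory Set

lemma cdf_const_mul {Ω : Type*} [MeasurableSpace Ω] (μ : Measure Ω) (y : Ω → ℝ)
    {c : ℝ} (hc : 0 < c) (x : ℝ) :
    cdf μ (fun ω => c * y ω) x = cdf μ y (x / c) := by
  unfold cdf
  have hset : {ω | c * y ω ≤ x} = {ω | y ω ≤ x / c} := by
    ext ω
    simp only [mem_setOf_eq]
    rw [le_div_iff₀ hc, mul_comm]
  rw [hset]

lemma int_scale {Ω : Type*} [MeasurableSpace Ω] (μ : Measure Ω) (y : Ω → ℝ)
    {c : ℝ} (hc : 0 < c) (α : ℝ) (F : ℝ → ℝ) (s : ℝ) :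
    (∫ x in Ioi (0:ℝ), F (cdf μ (fun ω => c * y ω) (s * x)) * (α * x ^ (α - 1))) =
    c ^ α * ∫ x in Ioi (0:ℝ), F (cdf μ y (s * x)) * (α * x ^ (α - 1)) := by
  have h1 : (∫ x in Ioi (0:ℝ), F (cdf μ (fun ω => c * y ω) (s * x)) * (α * x ^ (α - 1))) =
      ∫ x in Ioi (0:ℝ), F (cdf μ y (s * x / c)) * (α * x ^ (α - 1)) := by
    congr 1; ext x; rw [cdf_const_mul μ y hc]
  rw [h1]
  have h2 := integral_comp_mul_left_Ioi
      (fun x => F (cdf μ y (s * x / c)) * (α * x ^ (α - 1))) 0 hc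
  rw [mul_zero] at h2
  have h3 : (∫ x in Ioi (0:ℝ),
        (fun x => F (cdf μ y (s * x / c)) * (α * x ^ (α - 1))) (c * x)) =
      ∫ x in Ioi (0:ℝ), c ^ (α - 1) * (F (cdf μ y (s * x)) * (α * x ^ (α - 1))) := by
    apply setIntegral_congr_fun measurableSet_Ioi
    intro x hx
    simp only
    have harg : s * (c * x) / c = s * x := by field_simp
    rw [harg, Real.mul_rpow hc.le (le_of_lt hx)]
    ring
  rw [h3, integral_const_mul] at h2
  have h4 : c ^ α = c * c ^ (α - 1) := by
    have : c ^ α = c ^ (1:ℝ) * c ^ (α - 1) := by rw [← Real.rpow_add hc]; ring_nf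
    rw [this, Real.rpow_one]
  calc (∫ x in Ioi (0:ℝ), F (cdf μ y (s * x / c)) * (α * x ^ (α - 1)))
      = c • (c⁻¹ • ∫ x in Ioi (0:ℝ), F (cdf μ y (s * x / c)) * (α * x ^ (α - 1))) := by
        rw [smul_smul, mul_inv_cancel₀ hc.ne', one_smul]
    _ = c ^ α * ∫ x in Ioi (0:ℝ), F (cdf μ y (s * x)) * (α * x ^ (α - 1)) := by
        rw [← h2, smul_eq_mul, h4]; ring

lemma cptU_const_mul {Ω : Type*} [MeasurableSpace Ω] (μ : Measure Ω)
    (Tp Tm : ℝ → ℝ) (α lam : ℝ) (y : Ω → ℝ) {c : ℝ} (hc : 0 < c) :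
    cptU μ Tp Tm α lam (fun ω => c * y ω) = c ^ α * cptU μ Tp Tm α lam y := by
  have e1 : (∫ x in Ioi (0:ℝ), Tp (1 - cdf μ (fun ω => c * y ω) x) * (α * x ^ (α - 1))) =
      c ^ α * ∫ x in Ioi (0:ℝ), Tp (1 - cdf μ y x) * (α * x ^ (α - 1)) := by
    have := int_scale μ y hc α (fun t => Tp (1 - t)) 1
    simpa only [one_mul] using this
  have e2 : (∫ x in Ioi (0:ℝ),
        Tm (cdf μ (fun ω => c * y ω) (-x)) * (lam * (α * x ^ (α - 1)))) =
      c ^ α * ∫ x in Ioi (0:ℝ), Tm (cdf μ y (-x)) * (lam * (α * x ^ (α - 1))) := by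
    have := int_scale μ y hc α (fun t => lam * Tm t) (-1)
    simp only [neg_one_mul] at this
    have l1 : (∫ x in Ioi (0:ℝ),
          Tm (cdf μ (fun ω => c * y ω) (-x)) * (lam * (α * x ^ (α - 1)))) =
        ∫ x in Ioi (0:ℝ), (lam * Tm (cdf μ (fun ω => c * y ω) (-x))) * (α * x ^ (α - 1)) := by
      congr 1; ext x; ring
    have l2 : (∫ x in Ioi (0:ℝ), Tm (cdf μ y (-x)) * (lam * (α * x ^ (α - 1)))) =
        ∫ x in Ioi (0:ℝ), (lam * Tm (cdf μ y (-x))) * (α * x ^ (α - 1)) := by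
      congr 1; ext x; ring
    rw [l1, l2, this]
  unfold cptU
  rw [e1, e2]
  ring

lemma cptU_zero_mul {Ω : Type*} [MeasurableSpace Ω] (μ : Measure Ω)
    [IsProbabilityMeasure μ] (Tp Tm : ℝ → ℝ) (α lam : ℝ)
    (hT0p : Tp 0 = 0) (hT0m : Tm 0 = 0) (y : Ω → ℝ) :
    cptU μ Tp Tm α lam (fun ω => 0 * y ω) = 0 := by
  unfold cptU
  have e1 : (∫ x in Ioi (0:ℝ), Tp (1 - cdf μ (fun ω => 0 * y ω) x) * (α * x ^ (α - 1))) = 0 := by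
    have : (∫ x in Ioi (0:ℝ), Tp (1 - cdf μ (fun ω => 0 * y ω) x) * (α * x ^ (α - 1))) =
        ∫ _x in Ioi (0:ℝ), (0:ℝ) := by
      apply setIntegral_congr_fun measurableSet_Ioi
      intro x hx
      have hset : {ω | (fun ω => 0 * y ω) ω ≤ x} = univ := by
        ext ω; simp only [mem_setOf_eq, mem_univ, iff_true, zero_mul]
        exact le_of_lt hx
      have : cdf μ (fun ω => 0 * y ω) x = 1 := by
        unfold cdf; rw [hset, measure_univ]; simp
      show Tp (1 - cdf μ (fun ω => 0 * y ω) x) * (α * x ^ (α - 1)) = 0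
      rw [this]
      norm_num [hT0p]
    rw [this, integral_zero]
  have e2 : (∫ x in Ioi (0:ℝ),
      Tm (cdf μ (fun ω => 0 * y ω) (-x)) * (lam * (α * x ^ (α - 1)))) = 0 := by
    have : (∫ x in Ioi (0:ℝ),
        Tm (cdf μ (fun ω => 0 * y ω) (-x)) * (lam * (α * x ^ (α - 1)))) =
        ∫ _x in Ioi (0:ℝ), (0:ℝ) := by
      apply setIntegral_congr_fun measurableSet_Ioi
      intro x hx
      have hset : {ω | (fun ω => 0 * y ω) ω ≤ -x} = (∅ : Set Ω) := by
        ext ω; simp only [mem_setOf_eq, mem_empty_iff_false, iff_false, zero_mul, not_le]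
        linarith [mem_Ioi.mp hx]
      have : cdf μ (fun ω => 0 * y ω) (-x) = 0 := by
        unfold cdf; rw [hset]; simp
      show Tm (cdf μ (fun ω => 0 * y ω) (-x)) * (lam * (α * x ^ (α - 1))) = 0
      rw [this, hT0m, zero_mul]
    rw [this, integral_zero]
  rw [e1, e2]; ring

lemma cptU_mul_eq {Ω : Type*} [MeasurableSpace Ω] (μ : Measure Ω)
    [IsProbabilityMeasure μ] (Tp Tm : ℝ → ℝ) (α lam : ℝ) (hα : 0 < α)
    (hT0p : Tp 0 = 0) (hT0m : Tm 0 = 0) (y : Ω → ℝ) (v : ℝ) :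
    cptU μ Tp Tm α lam (fun ω => v * y ω) =
      if 0 ≤ v then v ^ α * cptU μ Tp Tm α lam y
      else (-v) ^ α * cptU μ Tp Tm α lam (fun ω => -y ω) := by
  rcases lt_trichotomy v 0 with hv | hv | hv
  · rw [if_neg (not_le.mpr hv)]
    have heq : (fun ω => v * y ω) = fun ω => (-v) * ((fun ω => -y ω) ω) := by
      funext ω; ring
    rw [heq, cptU_const_mul μ Tp Tm α lam (fun ω => -y ω) (neg_pos.mpr hv)]
  · subst hv
    rw [if_pos le_rfl, cptU_zero_mul μ Tp Tm α lam hT0p hT0m y,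
      Real.zero_rpow hα.ne', zero_mul]
  · rw [if_pos hv.le, cptU_const_mul μ Tp Tm α lam y hv]

lemma gfun_rep (α k h A B : ℝ) (hα : 0 < α) {z : ℝ} (hz : z ∈ Icc A B) :
    gfun α k h A B z = if 0 ≤ z then z ^ α * k else (-z) ^ α * h := by
  obtain ⟨h1, h2⟩ := hz
  unfold gfun
  by_cases hz0 : 0 ≤ z
  · rw [if_pos hz0, if_pos (mem_Icc.mpr ⟨hz0, h2⟩)]
    rcases eq_or_lt_of_le hz0 with he | hlt
    · rw [if_pos (mem_Icc.mpr ⟨by linarith, by linarith⟩), ← he]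
      simp [Real.zero_rpow hα.ne']
    · rw [if_neg (fun hc => absurd (mem_Icc.mp hc).2 (not_le.mpr hlt)), add_zero]
  · rw [if_neg hz0, if_neg (fun hc => absurd (mem_Icc.mp hc).1 hz0),
      if_pos (mem_Icc.mpr ⟨h1, (not_le.mp hz0).le⟩), zero_add]

lemma lfun_rep (α k h A B : ℝ) (hα : 0 < α) {z : ℝ} (hz : z ∈ Icc (-B) (-A)) :
    lfun α k h A B z = if 0 ≤ z then z ^ α * h else (-z) ^ α * k := by
  obtain ⟨h1, h2⟩ := hz
  unfold lfun
  by_cases hz0 : 0 ≤ z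
  · rw [if_pos hz0, if_pos (mem_Icc.mpr ⟨hz0, h2⟩)]
    rcases eq_or_lt_of_le hz0 with he | hlt
    · rw [if_pos (mem_Icc.mpr ⟨h1, by linarith⟩), ← he]
      simp [Real.zero_rpow hα.ne']
    · rw [if_neg (fun hc => absurd (mem_Icc.mp hc).2 (not_le.mpr hlt)), zero_add]
  · rw [if_neg hz0, if_pos (mem_Icc.mpr ⟨h1, (not_le.mp hz0).le⟩),
      if_neg (fun hc => absurd (mem_Icc.mp hc).1 hz0), add_zero]


/-- Single-period optimal strategy: `v* = k* W` if `W ≥ 0`, `v* = k̂* W` if `W < 0`, where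
`k*` maximizes `g` on `[A,B]` and `k̂*` maximizes `l` on `[-B,-A]`; `v*` is admissible and
dominates every admissible strategy. -/
theorem single_period_optimal_strategy {Ω : Type*} [MeasurableSpace Ω] (μ : Measure Ω)
    [IsProbabilityMeasure μ] (Tp Tm : ℝ → ℝ) (α lam : ℝ)
    (hα : 0 < α) (hα1 : α < 1) (hlam : 1 < lam)
    (hT0p : Tp 0 = 0) (hT1p : Tp 1 = 1) (hT0m : Tm 0 = 0) (hT1m : Tm 1 = 1)
    (y : Ω → ℝ) (hmeas : Measurable y) (hcont : Continuous (cdf μ y))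
    (hint1 : ∀ v : ℝ, IntegrableOn
      (fun x => Tp (1 - cdf μ (fun ω => v * y ω) x) * (α * x ^ (α - 1))) (Ioi 0))
    (hint2 : ∀ v : ℝ, IntegrableOn
      (fun x => Tm (cdf μ (fun ω => v * y ω) (-x)) * (lam * (α * x ^ (α - 1)))) (Ioi 0))
    (A B W : ℝ) (hA : A ≤ 0) (hB : 0 < B)
    (kstar khat : ℝ)
    (hk1 : kstar ∈ Icc A B)
    (hk2 : ∀ z ∈ Icc A B,
      gfun α (cptU μ Tp Tm α lam y) (cptU μ Tp Tm α lam (fun ω => -y ω)) A B z ≤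
        gfun α (cptU μ Tp Tm α lam y) (cptU μ Tp Tm α lam (fun ω => -y ω)) A B kstar)
    (hk3 : khat ∈ Icc (-B) (-A))
    (hk4 : ∀ z ∈ Icc (-B) (-A),
      lfun α (cptU μ Tp Tm α lam y) (cptU μ Tp Tm α lam (fun ω => -y ω)) A B z ≤
        lfun α (cptU μ Tp Tm α lam y) (cptU μ Tp Tm α lam (fun ω => -y ω)) A B khat) :
    A * |W| ≤ (if 0 ≤ W then kstar * W else khat * W) ∧
      (if 0 ≤ W then kstar * W else khat * W) ≤ B * |W| ∧
      ∀ v : ℝ, A * |W| ≤ v → v ≤ B * |W| →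
        cptU μ Tp Tm α lam (fun ω => v * y ω) ≤
          cptU μ Tp Tm α lam (fun ω => (if 0 ≤ W then kstar * W else khat * W) * y ω) := by
  set k := cptU μ Tp Tm α lam y with hkdef
  set hh := cptU μ Tp Tm α lam (fun ω => -y ω) with hhdef
  have Ueq := cptU_mul_eq μ Tp Tm α lam hα hT0p hT0m y
  by_cases hW : 0 ≤ W
  · simp only [if_pos hW]
    rw [abs_of_nonneg hW]
    refine ⟨mul_le_mul_of_nonneg_right hk1.1 hW, mul_le_mul_of_nonneg_right hk1.2 hW, ?_⟩
    intro v hv1 hv2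
    rcases eq_or_lt_of_le hW with hW0 | hWpos
    · -- W = 0
      have hv0 : v = 0 := le_antisymm (by rw [← hW0, mul_zero] at hv2; exact hv2)
        (by rw [← hW0, mul_zero] at hv1; exact hv1)
      have : kstar * W = 0 := by rw [← hW0, mul_zero]
      rw [hv0, this]
    · -- W > 0
      have Ug : ∀ z ∈ Icc A B, cptU μ Tp Tm α lam (fun ω => (z * W) * y ω) =
          gfun α k hh A B z * W ^ α := by
        intro z hzm
        rw [Ueq (z * W), gfun_rep α k hh A B hα hzm]
        by_cases hz0 : 0 ≤ z
        · rw [if_pos (mul_nonneg hz0 hW), if_pos hz0,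
            Real.mul_rpow hz0 hW]
          ring
        · push_neg at hz0
          rw [if_neg (not_le.mpr (mul_neg_of_neg_of_pos hz0 hWpos)), if_neg (not_le.mpr hz0),
            show -(z * W) = (-z) * W by ring, Real.mul_rpow (by linarith) hW]
          ring
      set z := v / W with hzdef
      have hvz : v = z * W := by rw [hzdef, div_mul_cancel₀ v hWpos.ne']
      have hzm : z ∈ Icc A B := by
        constructor
        · rw [hzdef, le_div_iff₀ hWpos]; linarith
        · rw [hzdef, div_le_iff₀ hWpos]; linarith
      have hveq : (fun ω => v * y ω) = fun ω => (z * W) * y ω := by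
        funext ω; rw [← hvz]
      rw [hveq, Ug z hzm, Ug kstar hk1]
      exact mul_le_mul_of_nonneg_right (hk2 z hzm) (Real.rpow_nonneg hW α)
  · push_neg at hW
    simp only [if_neg (not_le.mpr hW)]
    rw [abs_of_neg hW]
    refine ⟨by nlinarith [hk3.1, hk3.2], by nlinarith [hk3.1, hk3.2], ?_⟩
    intro v hv1 hv2
    have Ul : ∀ z ∈ Icc (-B) (-A), cptU μ Tp Tm α lam (fun ω => (z * W) * y ω) =
        lfun α k hh A B z * (-W) ^ α := by
      intro z hzm
      rw [Ueq (z * W), lfun_rep α k hh A B hα hzm]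
      rcases lt_trichotomy z 0 with hz0 | hz0 | hz0
      · rw [if_pos (by nlinarith : (0:ℝ) ≤ z * W), if_neg (not_le.mpr hz0),
          show z * W = (-z) * (-W) by ring, Real.mul_rpow (by linarith) (by linarith)]
        ring
      · subst hz0
        simp [Real.zero_rpow hα.ne']
      · rw [if_neg (not_le.mpr (mul_neg_of_pos_of_neg hz0 hW)), if_pos hz0.le,
          show -(z * W) = z * (-W) by ring, Real.mul_rpow hz0.le (by linarith)]
        ring
    set z := v / W with hzdef
    have hvz : v = z * W := by rw [hzdef, div_mul_cancel₀ v hW.ne]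
    have hzm : z ∈ Icc (-B) (-A) := by
      constructor
      · rw [hzdef, le_div_iff_of_neg hW]; linarith
      · rw [hzdef, div_le_iff_of_neg hW]; linarith
    have hveq : (fun ω => v * y ω) = fun ω => (z * W) * y ω := by
      funext ω; rw [← hvz]
    rw [hveq, Ul z hzm, Ul khat hk3]
    exact mul_le_mul_of_nonneg_right (hk4 z hzm) (Real.rpow_nonneg (by linarith) α)
end

section
/- Two-period backward recursion (Proposition for T-2): assuming the time-(T-1) optimal value is A_{T-1} W^{\alpha} 1_{W \ge 0} - B_{T-1}(-W)^{\alpha} 1_{W < 0}, the time-(T-2) optimal CPT value equals A_{T-2} W_{T-2}^{\alpha} 1_{W_{T-2} \ge 0} - B_{T-2}(-W_{T-2})^{\alpha} 1_{W_{T-2} < 0}, where A_{T-2} = \max_{z \in [A,B]} g_{T-2}(z), B_{T-2} = -\max_{z \in [-B,-A]} l_{T-2}(z), with g_{T-2}(z) = E[A_{T-1}(1+r+yz)^{\alpha} 1_{1+r+yz \ge 0} - B_{T-1}(-(1+r+yz))^{\alpha} 1_{1+r+yz < 0}] and l_{T-2}(z) = E[A_{T-1}(-(1+r+yz))^{\alpha}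 1_{1+r+yz < 0} - B_{T-1}(1+r+yz)^{\alpha} 1_{1+r+yz \ge 0}]. -/
open MeasureTheory Set

/-- The value function `V(w) = A₁ w^α 1_{w≥0} - B₁ (-w)^α 1_{w<0}`. -/
noncomputable def Vfun (α a b w : ℝ) : ℝ :=
  if 0 ≤ w then a * w ^ α else -b * (-w) ^ α

/-- The reflected value function `Ṽ(w) = A₁ (-w)^α 1_{w<0} - B₁ w^α 1_{w≥0}`. -/
noncomputable def Vtfun (α a b w : ℝ) : ℝ :=
  if 0 ≤ w then -b * w ^ α else a * (-w) ^ α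

lemma Vfun_eq {α : ℝ} (hα : 0 < α) (a b w : ℝ) :
    Vfun α a b w = a * (max w 0) ^ α - b * (max (-w) 0) ^ α := by
  unfold Vfun
  rcases le_or_gt 0 w with h | h
  · rw [if_pos h, max_eq_left h, max_eq_right (by linarith), Real.zero_rpow hα.ne']
    ring
  · rw [if_neg (not_le.2 h), max_eq_right h.le, max_eq_left (by linarith),
      Real.zero_rpow hα.ne']
    ring

lemma Vtfun_eq {α : ℝ} (hα : 0 < α) (a b w : ℝ) :
    Vtfun α a b w = a * (max (-w) 0) ^ α - b * (max w 0) ^ α := by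
  unfold Vtfun
  rcases le_or_gt 0 w with h | h
  · rw [if_pos h, max_eq_left h, max_eq_right (by linarith), Real.zero_rpow hα.ne']
    ring
  · rw [if_neg (not_le.2 h), max_eq_right h.le, max_eq_left (by linarith),
      Real.zero_rpow hα.ne']
    ring

lemma Vfun_neg {α : ℝ} (hα : 0 < α) (a b w : ℝ) :
    Vfun α a b (-w) = Vtfun α a b w := by
  rw [Vfun_eq hα, Vtfun_eq hα, neg_neg]

lemma continuous_Vfun {α : ℝ} (hα : 0 < α) (a b : ℝ) :
    Continuous (Vfun α a b) := by
  have h1 : Continuous fun w : ℝ => (max w 0) ^ α :=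
    (Real.continuous_rpow_const hα.le).comp (continuous_id.max continuous_const)
  have h2 : Continuous fun w : ℝ => (max (-w) 0) ^ α :=
    (Real.continuous_rpow_const hα.le).comp (continuous_neg.max continuous_const)
  have : Continuous fun w => a * (max w 0) ^ α - b * (max (-w) 0) ^ α :=
    ((continuous_const.mul h1).sub (continuous_const.mul h2))
  exact this.congr fun w => (Vfun_eq hα a b w).symm

lemma continuous_Vtfun {α : ℝ} (hα : 0 < α) (a b : ℝ) :
    Continuous (Vtfun α a b) := by
  have := (continuous_Vfun hα a b).comp continuous_neg
  exact this.congr fun w => Vfun_neg hα a b w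

lemma Vfun_hom_pos {α : ℝ} (hα : 0 < α) (a b : ℝ) {c : ℝ} (hc : 0 < c) (w : ℝ) :
    Vfun α a b (c * w) = c ^ α * Vfun α a b w := by
  rw [Vfun_eq hα, Vfun_eq hα]
  have h1 : max (c * w) 0 = c * max w 0 := by
    rw [max_comm, max_comm w 0, mul_max_of_nonneg _ _ hc.le, mul_zero]
  have h2 : max (-(c * w)) 0 = c * max (-w) 0 := by
    rw [← mul_neg, max_comm, max_comm (-w) 0, mul_max_of_nonneg _ _ hc.le, mul_zero]
  rw [h1, h2, Real.mul_rpow hc.le (le_max_right _ _), Real.mul_rpow hc.le (le_max_right _ _)]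
  ring

lemma Vfun_hom_neg {α : ℝ} (hα : 0 < α) (a b : ℝ) {c : ℝ} (hc : c < 0) (w : ℝ) :
    Vfun α a b (c * w) = (-c) ^ α * Vtfun α a b w := by
  have : c * w = (-c) * (-w) := by ring
  rw [this, Vfun_hom_pos hα a b (by linarith : (0:ℝ) < -c), Vfun_neg hα]

lemma add_rpow_le {α x y : ℝ} (hα : 0 ≤ α) (hα1 : α ≤ 1) (hx : 0 ≤ x) (hy : 0 ≤ y) :
    (x + y) ^ α ≤ x ^ α + y ^ α := by
  have h := NNReal.rpow_add_le_add_rpow x.toNNReal y.toNNReal hα hα1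
  have h2 := NNReal.coe_le_coe.2 h
  push_cast at h2
  rwa [Real.coe_toNNReal _ hx, Real.coe_toNNReal _ hy] at h2

lemma Vfun_bound {α : ℝ} (hα : 0 < α) (a b w : ℝ) :
    |Vfun α a b w| ≤ (|a| + |b|) * |w| ^ α := by
  rw [Vfun_eq hα]
  have h1 : (max w 0) ^ α ≤ |w| ^ α :=
    Real.rpow_le_rpow (le_max_right _ _) (max_le (le_abs_self w) (abs_nonneg w)) hα.le
  have h2 : (max (-w) 0) ^ α ≤ |w| ^ α :=
    Real.rpow_le_rpow (le_max_right _ _) (max_le (neg_le_abs w) (abs_nonneg w)) hα.le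
  have hp1 : 0 ≤ (max w 0) ^ α := Real.rpow_nonneg (le_max_right _ _) _
  have hp2 : 0 ≤ (max (-w) 0) ^ α := Real.rpow_nonneg (le_max_right _ _) _
  calc |a * (max w 0) ^ α - b * (max (-w) 0) ^ α|
      ≤ |a * (max w 0) ^ α| + |b * (max (-w) 0) ^ α| := abs_sub _ _
    _ = |a| * (max w 0) ^ α + |b| * (max (-w) 0) ^ α := by
        rw [abs_mul, abs_mul, abs_of_nonneg hp1, abs_of_nonneg hp2]
    _ ≤ |a| * |w| ^ α + |b| * |w| ^ α :=
        add_le_add (mul_le_mul_of_nonneg_left h1 (abs_nonneg a))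
          (mul_le_mul_of_nonneg_left h2 (abs_nonneg b))
    _ = (|a| + |b|) * |w| ^ α := by ring

lemma Vtfun_bound {α : ℝ} (hα : 0 < α) (a b w : ℝ) :
    |Vtfun α a b w| ≤ (|a| + |b|) * |w| ^ α := by
  rw [← Vfun_neg hα]
  simpa [abs_neg] using Vfun_bound hα a b (-w)

lemma contG {Ω : Type*} [MeasurableSpace Ω] (μ : Measure Ω) [IsProbabilityMeasure μ]
    (y : Ω → ℝ) {α : ℝ} (r a b : ℝ) (hα : 0 < α) (hα1 : α < 1)
    (hmeas : Measurable y) (hint : Integrable (fun ω => |y ω| ^ α) μ)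
    (V : ℝ → ℝ) (hV : Continuous V) (hVb : ∀ w, |V w| ≤ (|a| + |b|) * |w| ^ α)
    (s : Set ℝ) (M : ℝ) (hM : 0 ≤ M) (hsM : ∀ z ∈ s, |z| ≤ M) :
    ContinuousOn (fun z => ∫ ω, V (1 + r + y ω * z) ∂μ) s := by
  apply continuousOn_of_dominated
    (bound := fun ω => (|a| + |b|) * (|1 + r| ^ α + |y ω| ^ α * M ^ α))
  · intro z _
    exact (hV.measurable.comp (measurable_const.add (hmeas.mul_const z))).aestronglyMeasurable
  · intro z hz
    filter_upwards with ω
    have h1 : |V (1 + r + y ω * z)| ≤ (|a| + |b|) * |1 + r + y ω * z| ^ α := hVb _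
    have h2 : |1 + r + y ω * z| ^ α ≤ |1 + r| ^ α + |y ω * z| ^ α := by
      calc |1 + r + y ω * z| ^ α ≤ (|1 + r| + |y ω * z|) ^ α :=
            Real.rpow_le_rpow (abs_nonneg _) (abs_add_le _ _) hα.le
        _ ≤ |1 + r| ^ α + |y ω * z| ^ α :=
            add_rpow_le hα.le hα1.le (abs_nonneg _) (abs_nonneg _)
    have h3 : |y ω * z| ^ α ≤ |y ω| ^ α * M ^ α := by
      rw [abs_mul, Real.mul_rpow (abs_nonneg _) (abs_nonneg _)]
      exact mul_le_mul_of_nonneg_left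
        (Real.rpow_le_rpow (abs_nonneg _) (hsM z hz) hα.le)
        (Real.rpow_nonneg (abs_nonneg _) _)
    have hab : (0:ℝ) ≤ |a| + |b| := by positivity
    calc ‖V (1 + r + y ω * z)‖ = |V (1 + r + y ω * z)| := rfl
      _ ≤ (|a| + |b|) * |1 + r + y ω * z| ^ α := h1
      _ ≤ (|a| + |b|) * (|1 + r| ^ α + |y ω| ^ α * M ^ α) := by
          apply mul_le_mul_of_nonneg_left _ hab
          linarith
  · exact ((integrable_const _).add (hint.mul_const _)).const_mul _
  · filter_upwards with ω
    exact (hV.comp (continuous_const.add (continuous_const.mul continuous_id))).continuousOn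

lemma isGreatest_image_mul (G : ℝ → ℝ) (s : Set ℝ) (hs : IsCompact s) (hne : s.Nonempty)
    (hG : ContinuousOn G s) (c : ℝ) (hc : 0 ≤ c) :
    IsGreatest ((fun z => G z * c) '' s) (sSup (G '' s) * c) := by
  obtain ⟨z0, hz0, hmax⟩ := hs.exists_isMaxOn hne hG
  have hgr : IsGreatest (G '' s) (G z0) :=
    ⟨mem_image_of_mem _ hz0, by rintro _ ⟨z, hz, rfl⟩; exact hmax hz⟩
  rw [hgr.csSup_eq]
  constructor
  · exact mem_image_of_mem _ hz0
  · rintro _ ⟨z, hz, rfl⟩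
    exact mul_le_mul_of_nonneg_right (hmax hz) hc

/-- Two-period backward recursion: given the time-(T-1) value function
`V(w) = A_{T-1} w^α 1_{w≥0} - B_{T-1}(-w)^α 1_{w<0}`, the time-(T-2) optimal value of
`E[V((1+r)W + v y)]` over admissible `v ∈ [A|W|, B|W|]` equals
`A_{T-2} W^α 1_{W≥0} - B_{T-2} (-W)^α 1_{W<0}`, where
`A_{T-2} = max_{z∈[A,B]} E[V(1+r+yz)]` and `B_{T-2} = -max_{z∈[-B,-A]} E[Ṽ(1+r+yz)]`. -/
theorem two_period_recursion {Ω : Type*} [MeasurableSpace Ω] (μ : Measure Ω)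
    [IsProbabilityMeasure μ] (y : Ω → ℝ) (α r A B At1 Bt1 W : ℝ)
    (hα : 0 < α) (hα1 : α < 1) (hr : -1 < r) (hA : A ≤ 0) (hB : 0 < B)
    (hmeas : Measurable y) (hint : Integrable (fun ω => |y ω| ^ α) μ) :
    IsGreatest
      {u : ℝ | ∃ v : ℝ, A * |W| ≤ v ∧ v ≤ B * |W| ∧
        u = ∫ ω, Vfun α At1 Bt1 ((1 + r) * W + v * y ω) ∂μ}
      (if 0 ≤ W then
          sSup ((fun z => ∫ ω, Vfun α At1 Bt1 (1 + r + y ω * z) ∂μ) '' Icc A B) * W ^ α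
        else
          -(-sSup ((fun z => ∫ ω, Vtfun α At1 Bt1 (1 + r + y ω * z) ∂μ) '' Icc (-B) (-A))) *
            (-W) ^ α) := by
  set M : ℝ := max (-A) B with hMdef
  have hM : 0 ≤ M := le_max_of_le_right hB.le
  rcases lt_trichotomy W 0 with hW | hW | hW
  · -- W < 0
    rw [if_neg (not_le.2 hW), neg_neg]
    set H : ℝ → ℝ := fun z => ∫ ω, Vtfun α At1 Bt1 (1 + r + y ω * z) ∂μ with hHdef
    have habs : |W| = -W := abs_of_neg hW
    have hset : {u : ℝ | ∃ v : ℝ, A * |W| ≤ v ∧ v ≤ B * |W| ∧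
        u = ∫ ω, Vfun α At1 Bt1 ((1 + r) * W + v * y ω) ∂μ} =
        (fun z => H z * (-W) ^ α) '' Icc (-B) (-A) := by
      ext u
      simp only [mem_setOf_eq, mem_image, mem_Icc, habs]
      constructor
      · rintro ⟨v, h1, h2, rfl⟩
        refine ⟨v / W, ⟨?_, ?_⟩, ?_⟩
        · rw [le_div_iff_of_neg hW]; nlinarith
        · rw [div_le_iff_of_neg hW]; nlinarith
        · have key : ∀ ω : Ω, (1 + r) * W + v * y ω = W * (1 + r + y ω * (v / W)) := by
            intro ω; field_simp [hW.ne]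
          symm
          calc ∫ ω, Vfun α At1 Bt1 ((1 + r) * W + v * y ω) ∂μ
              = ∫ ω, (-W) ^ α * Vtfun α At1 Bt1 (1 + r + y ω * (v / W)) ∂μ := by
                congr 1; funext ω; rw [key ω, Vfun_hom_neg hα _ _ hW]
            _ = H (v / W) * (-W) ^ α := by rw [integral_const_mul]; ring
      · rintro ⟨z, ⟨hz1, hz2⟩, rfl⟩
        refine ⟨z * W, by nlinarith, by nlinarith, ?_⟩
        have key : ∀ ω : Ω, (1 + r) * W + z * W * y ω = W * (1 + r + y ω * z) := by
          intro ω; ring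
        calc H z * (-W) ^ α
            = ∫ ω, (-W) ^ α * Vtfun α At1 Bt1 (1 + r + y ω * z) ∂μ := by
              rw [integral_const_mul]; ring
          _ = ∫ ω, Vfun α At1 Bt1 ((1 + r) * W + z * W * y ω) ∂μ := by
              congr 1; funext ω; rw [key ω, Vfun_hom_neg hα _ _ hW]
    rw [hset]
    refine isGreatest_image_mul H _ isCompact_Icc ⟨-B, left_mem_Icc.2 (by linarith)⟩ ?_ _
      (Real.rpow_nonneg (by linarith) _)
    refine contG μ y r At1 Bt1 hα hα1 hmeas hint _ (continuous_Vtfun hα _ _)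
      (Vtfun_bound hα _ _) _ M hM ?_
    intro z hz
    rw [abs_le]
    constructor
    · have := le_max_right (-A) B; linarith [hz.1]
    · have := le_max_left (-A) B; linarith [hz.2]
  · -- W = 0
    subst hW
    rw [if_pos le_rfl, Real.zero_rpow hα.ne', mul_zero]
    constructor
    · refine ⟨0, by simp, by simp, ?_⟩
      simp [Vfun, Real.zero_rpow hα.ne']
    · rintro u ⟨v, h1, h2, rfl⟩
      have hv : v = 0 := le_antisymm (by simpa using h2) (by simpa using h1)
      subst hv
      simp [Vfun, Real.zero_rpow hα.ne']
  · -- W > 0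
    rw [if_pos hW.le]
    set G : ℝ → ℝ := fun z => ∫ ω, Vfun α At1 Bt1 (1 + r + y ω * z) ∂μ with hGdef
    have habs : |W| = W := abs_of_pos hW
    have hset : {u : ℝ | ∃ v : ℝ, A * |W| ≤ v ∧ v ≤ B * |W| ∧
        u = ∫ ω, Vfun α At1 Bt1 ((1 + r) * W + v * y ω) ∂μ} =
        (fun z => G z * W ^ α) '' Icc A B := by
      ext u
      simp only [mem_setOf_eq, mem_image, mem_Icc, habs]
      constructor
      · rintro ⟨v, h1, h2, rfl⟩
        refine ⟨v / W, ⟨?_, ?_⟩, ?_⟩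
        · rw [le_div_iff₀ hW]; linarith
        · rw [div_le_iff₀ hW]; linarith
        · have key : ∀ ω : Ω, (1 + r) * W + v * y ω = W * (1 + r + y ω * (v / W)) := by
            intro ω; field_simp [hW.ne']
          symm
          calc ∫ ω, Vfun α At1 Bt1 ((1 + r) * W + v * y ω) ∂μ
              = ∫ ω, W ^ α * Vfun α At1 Bt1 (1 + r + y ω * (v / W)) ∂μ := by
                congr 1; funext ω; rw [key ω, Vfun_hom_pos hα _ _ hW]
            _ = G (v / W) * W ^ α := by rw [integral_const_mul]; ring
      · rintro ⟨z, ⟨hz1, hz2⟩, rfl⟩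
        refine ⟨z * W, by nlinarith, by nlinarith, ?_⟩
        have key : ∀ ω : Ω, (1 + r) * W + z * W * y ω = W * (1 + r + y ω * z) := by
          intro ω; ring
        calc G z * W ^ α
            = ∫ ω, W ^ α * Vfun α At1 Bt1 (1 + r + y ω * z) ∂μ := by
              rw [integral_const_mul]; ring
          _ = ∫ ω, Vfun α At1 Bt1 ((1 + r) * W + z * W * y ω) ∂μ := by
            congr 1; funext ω; rw [key ω, Vfun_hom_pos hα _ _ hW]
    rw [hset]
    refine isGreatest_image_mul G _ isCompact_Icc ⟨A, left_mem_Icc.2 (by linarith)⟩ ?_ _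
      (Real.rpow_nonneg hW.le _)
    refine contG μ y r At1 Bt1 hα hα1 hmeas hint _ (continuous_Vfun hα _ _)
      (Vfun_bound hα _ _) _ M hM ?_
    intro z hz
    rw [abs_le]
    constructor
    · have := le_max_left (-A) B; linarith [hz.1]
    · have := le_max_right (-A) B; linarith [hz.2]
end

section
/- Multi-period backward induction (main theorem): for each t = T-1, ..., 0, the supremum of E[V_{t+1}((1+r_t)W_t + v_t y_{t+1})] over admissible v_t \in [A|W_t|, B|W_t|] equals V_t(W_t), where V_t(w) = A_t w^{\alpha} 1_{w \ge 0} - B_t(-w)^{\alpha} 1_{w < 0}, and A_t = \max_{z \in [A,B]} g_t(z), B_t = -\max_{z \in [-B,-A]} l_t(z), with g_t(z) = E[A_{t+1}(1+r_t+y_{t+1}z)_+^{\alpha} - B_{t+1}(1+r_t+y_{t+1}z)_-^{\alpha}] and l_t(z) = E[A_{t+1}(1+r_t+y_{t+1}z)_-^{\alpha} - B_{t+1}(1+r_t+y_{t+1}z)_+^{\alpha}]. Consequently the optimal strategy is v_t^* = k_t^* W_t if W_t \ge 0 and \hat{k}_t^* W_t if W_t < 0, where k_t^* and \hat{k}_t^*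 are the respective arg-maxima. -/
open MeasureTheory Set
open scoped NNReal

private lemma my_rpow_add_le {α : ℝ} (hα : 0 ≤ α) (hα1 : α ≤ 1) {x y : ℝ}
    (hx : 0 ≤ x) (hy : 0 ≤ y) : (x + y) ^ α ≤ x ^ α + y ^ α := by
  have h := NNReal.rpow_add_le_add_rpow x.toNNReal y.toNNReal hα hα1
  have hxy : ((x.toNNReal + y.toNNReal : ℝ≥0) : ℝ) = x + y := by
    simp [Real.coe_toNNReal _ hx, Real.coe_toNNReal _ hy]
  calc (x + y) ^ α = (((x.toNNReal + y.toNNReal) ^ α : ℝ≥0) : ℝ) := by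
        rw [NNReal.coe_rpow, hxy]
    _ ≤ ((x.toNNReal ^ α + y.toNNReal ^ α : ℝ≥0) : ℝ) := by exact_mod_cast h
    _ = x ^ α + y ^ α := by
        simp [NNReal.coe_rpow, Real.coe_toNNReal _ hx, Real.coe_toNNReal _ hy]


private lemma Vfun_mul {α a b : ℝ} (hα : 0 < α) {c : ℝ} (hc : 0 ≤ c) (u : ℝ) :
    Vfun α a b (c * u) = c ^ α * Vfun α a b u := by
  obtain rfl | hc := hc.eq_or_lt
  · simp [Vfun, Real.zero_rpow hα.ne']
  · rcases le_or_gt 0 u with hu | hu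
    · rw [Vfun, if_pos (mul_nonneg hc.le hu), Vfun, if_pos hu,
        Real.mul_rpow hc.le hu]
      ring
    · rw [Vfun, if_neg (not_le.2 (mul_neg_of_pos_of_neg hc hu)), Vfun,
        if_neg (not_le.2 hu), show -(c * u) = c * (-u) by ring,
        Real.mul_rpow hc.le (by linarith)]
      ring

private lemma Vfun_mul_neg {α a b : ℝ} (hα : 0 < α) {c : ℝ} (hc : c ≤ 0) (u : ℝ) :
    Vfun α a b (c * u) = (-c) ^ α * Vtfun α a b u := by
  rcases hc.lt_or_eq with hc | rfl
  · rcases le_or_gt 0 u with hu | hu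
    · rcases hu.eq_or_lt with rfl | hu
      · simp [Vfun, Vtfun, Real.zero_rpow hα.ne']
      · rw [Vfun, if_neg (not_le.2 (mul_neg_of_neg_of_pos hc hu)), Vtfun,
          if_pos hu.le, show -(c * u) = (-c) * u by ring,
          Real.mul_rpow (by linarith) hu.le]
        ring
    · rw [Vfun, if_pos (mul_pos_of_neg_of_neg hc hu).le, Vtfun,
        if_neg (not_le.2 hu), show c * u = (-c) * (-u) by ring,
        Real.mul_rpow (by linarith) (by linarith)]
      ring
  · simp [Vfun, Vtfun, Real.zero_rpow hα.ne']

private lemma Vfun_abs_le {α a b : ℝ} (w : ℝ) :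
    |Vfun α a b w| ≤ (|a| + |b|) * |w| ^ α := by
  rw [Vfun]
  split
  · next h =>
    rw [abs_mul, abs_of_nonneg h]
    have : |w ^ α| = w ^ α := abs_of_nonneg (Real.rpow_nonneg h α)
    rw [this]
    exact mul_le_mul_of_nonneg_right (by simp [abs_nonneg, le_add_iff_nonneg_right])
      (Real.rpow_nonneg h α)
  · next h =>
    push_neg at h
    rw [abs_mul, abs_of_neg h, abs_neg]
    have : |(-w) ^ α| = (-w) ^ α := abs_of_nonneg (Real.rpow_nonneg (by linarith) α)
    rw [this]
    exact mul_le_mul_of_nonneg_right (by simp [abs_nonneg, le_add_iff_nonneg_left])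
      (Real.rpow_nonneg (by linarith) α)

private lemma Vtfun_abs_le {α a b : ℝ} (w : ℝ) :
    |Vtfun α a b w| ≤ (|a| + |b|) * |w| ^ α := by
  rw [Vtfun]
  split
  · next h =>
    rw [abs_mul, abs_of_nonneg h, abs_neg]
    have : |w ^ α| = w ^ α := abs_of_nonneg (Real.rpow_nonneg h α)
    rw [this]
    exact mul_le_mul_of_nonneg_right (by simp [abs_nonneg, le_add_iff_nonneg_left])
      (Real.rpow_nonneg h α)
  · next h =>
    push_neg at h
    rw [abs_mul, abs_of_neg h]
    have : |(-w) ^ α| = (-w) ^ α := abs_of_nonneg (Real.rpow_nonneg (by linarith) α)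
    rw [this]
    exact mul_le_mul_of_nonneg_right (by simp [abs_nonneg, le_add_iff_nonneg_right])
      (Real.rpow_nonneg (by linarith) α)

private lemma Vfun_continuous {α a b : ℝ} (hα : 0 < α) : Continuous (Vfun α a b) := by
  have h : Vfun α a b = fun w => if (0:ℝ) ≤ w then a * |w| ^ α else -b * |w| ^ α := by
    funext w
    rw [Vfun]
    split
    · next hw => rw [abs_of_nonneg hw]
    · next hw => rw [abs_of_neg (not_le.1 hw)]
  rw [h]
  refine Continuous.if_le ?_ ?_ continuous_const continuous_id ?_
  · exact continuous_const.mul ((Real.continuous_rpow_const hα.le).comp continuous_abs)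
  · exact continuous_const.mul ((Real.continuous_rpow_const hα.le).comp continuous_abs)
  · intro w hw
    simp [← hw, Real.zero_rpow hα.ne']

private lemma Vtfun_continuous {α a b : ℝ} (hα : 0 < α) : Continuous (Vtfun α a b) := by
  have h : Vtfun α a b = fun w => if (0:ℝ) ≤ w then -b * |w| ^ α else a * |w| ^ α := by
    funext w
    rw [Vtfun]
    split
    · next hw => rw [abs_of_nonneg hw]
    · next hw => rw [abs_of_neg (not_le.1 hw)]
  rw [h]
  refine Continuous.if_le ?_ ?_ continuous_const continuous_id ?_
  · exact continuous_const.mul ((Real.continuous_rpow_const hα.le).comp continuous_abs)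
  · exact continuous_const.mul ((Real.continuous_rpow_const hα.le).comp continuous_abs)
  · intro w hw
    simp [← hw, Real.zero_rpow hα.ne']

private lemma cont_param_integral {Ω : Type*} [MeasurableSpace Ω] (μ : Measure Ω)
    [IsFiniteMeasure μ] {V : ℝ → ℝ} {C ρ α : ℝ} (hα : 0 < α) (hα1 : α ≤ 1)
    (hC : 0 ≤ C) (hVc : Continuous V) (hVb : ∀ w, |V w| ≤ C * |w| ^ α)
    {Y : Ω → ℝ} (hY : Measurable Y) (hYint : Integrable (fun ω => |Y ω| ^ α) μ) :
    Continuous fun z => ∫ ω, V (1 + ρ + Y ω * z) ∂μ := by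
  rw [continuous_iff_continuousAt]
  intro z₀
  apply continuousAt_of_dominated
    (bound := fun ω => C * |1 + ρ| ^ α + (C * (|z₀| + 1) ^ α) * |Y ω| ^ α)
  · exact Filter.Eventually.of_forall fun z =>
      (hVc.measurable.comp ((hY.mul_const z).const_add (1 + ρ))).aestronglyMeasurable
  · filter_upwards [Metric.ball_mem_nhds z₀ one_pos] with z hz
    apply Filter.Eventually.of_forall
    intro ω
    have hzb : |z| ≤ |z₀| + 1 := by
      have h1 : |z - z₀| < 1 := by simpa [Real.dist_eq] using hz
      calc |z| = |z₀ + (z - z₀)| := by ring_nf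
        _ ≤ |z₀| + |z - z₀| := abs_add_le _ _
        _ ≤ |z₀| + 1 := by linarith
    have hsub : |1 + ρ + Y ω * z| ^ α ≤ |1 + ρ| ^ α + |Y ω| ^ α * (|z₀| + 1) ^ α := by
      calc |1 + ρ + Y ω * z| ^ α ≤ (|1 + ρ| + |Y ω * z|) ^ α :=
            Real.rpow_le_rpow (abs_nonneg _) (abs_add_le _ _) hα.le
        _ ≤ |1 + ρ| ^ α + |Y ω * z| ^ α :=
            my_rpow_add_le hα.le hα1 (abs_nonneg _) (abs_nonneg _)
        _ ≤ |1 + ρ| ^ α + |Y ω| ^ α * (|z₀| + 1) ^ α := by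
            rw [abs_mul, Real.mul_rpow (abs_nonneg _) (abs_nonneg _)]
            exact add_le_add_right (mul_le_mul_of_nonneg_left
              (Real.rpow_le_rpow (abs_nonneg z) hzb hα.le)
              (Real.rpow_nonneg (abs_nonneg _) α)) _
    calc ‖V (1 + ρ + Y ω * z)‖ = |V (1 + ρ + Y ω * z)| := rfl
      _ ≤ C * |1 + ρ + Y ω * z| ^ α := hVb _
      _ ≤ C * (|1 + ρ| ^ α + |Y ω| ^ α * (|z₀| + 1) ^ α) :=
          mul_le_mul_of_nonneg_left hsub hC
      _ = C * |1 + ρ| ^ α + (C * (|z₀| + 1) ^ α) * |Y ω| ^ α := by ring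
  · exact (integrable_const _).add (hYint.const_mul _)
  · refine Filter.Eventually.of_forall fun ω => ?_
    exact (hVc.comp (continuous_const.add (continuous_const.mul continuous_id))).continuousAt


/-- Multi-period backward induction (main theorem): with
`g_t(z) = E[A_{t+1}(1+r_t+y_{t+1}z)₊^α - B_{t+1}(1+r_t+y_{t+1}z)₋^α]`,
`l_t(z) = E[A_{t+1}(1+r_t+y_{t+1}z)₋^α - B_{t+1}(1+r_t+y_{t+1}z)₊^α]`,
`A_t = max_{[A,B]} g_t` and `B_t = -max_{[-B,-A]} l_t`, the supremum of
`E[V_{t+1}((1+r_t)W + v y_{t+1})]` over admissible `v ∈ [A|W|, B|W|]` equals `V_t(W)`,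
and the optimum is attained at `v_t* = k_t* W` (`W ≥ 0`) resp. `k̂_t* W` (`W < 0`) for
any arg-maximum `k_t*` of `g_t` resp. `k̂_t*` of `l_t`. -/
theorem multi_period_backward_induction {Ω : Type*} [MeasurableSpace Ω] (μ : Measure Ω)
    [IsProbabilityMeasure μ] (T : ℕ) (α A B : ℝ) (r : ℕ → ℝ) (y : ℕ → Ω → ℝ)
    (At Bt : ℕ → ℝ) (g l : ℕ → ℝ → ℝ)
    (hα : 0 < α) (hα1 : α < 1) (hA : A ≤ 0) (hB : 0 < B)
    (hr : ∀ t, -1 < r t) (hmeas : ∀ t, Measurable (y t))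
    (hint : ∀ t, Integrable (fun ω => |y t ω| ^ α) μ)
    (hg : ∀ t z, g t z = ∫ ω, Vfun α (At (t + 1)) (Bt (t + 1)) (1 + r t + y (t + 1) ω * z) ∂μ)
    (hl : ∀ t z, l t z = ∫ ω, Vtfun α (At (t + 1)) (Bt (t + 1)) (1 + r t + y (t + 1) ω * z) ∂μ)
    (hAt : ∀ t, t < T - 1 → At t = sSup (g t '' Icc A B))
    (hBt : ∀ t, t < T - 1 → Bt t = -sSup (l t '' Icc (-B) (-A))) :
    ∀ t, t < T - 1 → ∀ W : ℝ,
      IsGreatest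
        {u : ℝ | ∃ v : ℝ, A * |W| ≤ v ∧ v ≤ B * |W| ∧
          u = ∫ ω, Vfun α (At (t + 1)) (Bt (t + 1)) ((1 + r t) * W + v * y (t + 1) ω) ∂μ}
        (Vfun α (At t) (Bt t) W) ∧
      (∀ kst ∈ Icc A B, (∀ z ∈ Icc A B, g t z ≤ g t kst) → 0 ≤ W →
        (∫ ω, Vfun α (At (t + 1)) (Bt (t + 1)) ((1 + r t) * W + kst * W * y (t + 1) ω) ∂μ) =
          Vfun α (At t) (Bt t) W) ∧
      (∀ kht ∈ Icc (-B) (-A), (∀ z ∈ Icc (-B) (-A), l t z ≤ l t kht) → W < 0 →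
        (∫ ω, Vfun α (At (t + 1)) (Bt (t + 1)) ((1 + r t) * W + kht * W * y (t + 1) ω) ∂μ) =
          Vfun α (At t) (Bt t) W) := by
  intro t ht W
  have hAB : A ≤ B := hA.trans hB.le
  have hBA : -B ≤ -A := by linarith
  set a := At (t + 1) with ha
  set b := Bt (t + 1) with hb
  have hgc : Continuous (g t) := by
    have h : g t = fun z => ∫ ω, Vfun α a b (1 + r t + y (t + 1) ω * z) ∂μ :=
      funext (hg t)
    rw [h]
    exact cont_param_integral μ hα hα1.le (by positivity) (Vfun_continuous hα)
      Vfun_abs_le (hmeas _) (hint _)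
  have hlc : Continuous (l t) := by
    have h : l t = fun z => ∫ ω, Vtfun α a b (1 + r t + y (t + 1) ω * z) ∂μ :=
      funext (hl t)
    rw [h]
    exact cont_param_integral μ hα hα1.le (by positivity) (Vtfun_continuous hα)
      Vtfun_abs_le (hmeas _) (hint _)
  obtain ⟨ks, hks, hksmax⟩ :=
    isCompact_Icc.exists_isMaxOn (nonempty_Icc.2 hAB) hgc.continuousOn
  obtain ⟨kh, hkh, hkhmax⟩ :=
    isCompact_Icc.exists_isMaxOn (nonempty_Icc.2 hBA) hlc.continuousOn
  have hAeq : At t = g t ks := by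
    rw [hAt t ht]
    exact IsGreatest.csSup_eq ⟨mem_image_of_mem _ hks, by
      rintro u ⟨z, hz, rfl⟩; exact hksmax hz⟩
  have hBeq : Bt t = -l t kh := by
    rw [hBt t ht]
    congr 1
    exact IsGreatest.csSup_eq ⟨mem_image_of_mem _ hkh, by
      rintro u ⟨z, hz, rfl⟩; exact hkhmax hz⟩
  have key_pos : ∀ z : ℝ, 0 ≤ W →
      (∫ ω, Vfun α a b ((1 + r t) * W + z * W * y (t + 1) ω) ∂μ) = W ^ α * g t z := by
    intro z hW
    have h : ∀ ω, (1 + r t) * W + z * W * y (t + 1) ω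
        = W * (1 + r t + y (t + 1) ω * z) := fun ω => by ring
    simp_rw [h, Vfun_mul hα hW]
    rw [integral_const_mul, ← hg]
  have key_neg : ∀ z : ℝ, W ≤ 0 →
      (∫ ω, Vfun α a b ((1 + r t) * W + z * W * y (t + 1) ω) ∂μ) = (-W) ^ α * l t z := by
    intro z hW
    have h : ∀ ω, (1 + r t) * W + z * W * y (t + 1) ω
        = W * (1 + r t + y (t + 1) ω * z) := fun ω => by ring
    simp_rw [h, Vfun_mul_neg hα hW]
    rw [integral_const_mul, ← hl]
  rcases lt_trichotomy W 0 with hW | rfl | hW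
  · -- W < 0
    have habs : |W| = -W := abs_of_neg hW
    have hV : Vfun α (At t) (Bt t) W = (-W) ^ α * l t kh := by
      rw [Vfun, if_neg (not_le.2 hW), hBeq]; ring
    have hnn : (0:ℝ) ≤ (-W) ^ α := Real.rpow_nonneg (by linarith) α
    refine ⟨⟨⟨kh * W, ?_, ?_, ?_⟩, ?_⟩, ?_, ?_⟩
    · rw [habs]; nlinarith [hkh.2]
    · rw [habs]; nlinarith [hkh.1]
    · rw [key_neg kh hW.le, hV]
    · rintro u ⟨v, hv1, hv2, rfl⟩
      rw [habs] at hv1 hv2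
      have hzv : v = v / W * W := (div_mul_cancel₀ v hW.ne).symm
      have hz : v / W ∈ Icc (-B) (-A) := by
        constructor
        · rw [le_div_iff_of_neg hW]; nlinarith
        · rw [div_le_iff_of_neg hW]; nlinarith
      rw [hzv, key_neg (v / W) hW.le, hV]
      exact mul_le_mul_of_nonneg_left (hkhmax hz) hnn
    · intro kst _ _ hW0; linarith
    · intro kht hkht hkhtmax _
      have heq : l t kht = l t kh := le_antisymm (hkhmax hkht) (hkhtmax kh hkh)
      rw [key_neg kht hW.le, heq, hV]
  · -- W = 0
    refine ⟨⟨⟨0, by simp, by simp, ?_⟩, ?_⟩, ?_, ?_⟩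
    · simp [Vfun, Real.zero_rpow hα.ne']
    · rintro u ⟨v, hv1, hv2, rfl⟩
      have hv : v = 0 := le_antisymm (by simpa using hv2) (by simpa using hv1)
      subst hv
      simp [Vfun, Real.zero_rpow hα.ne']
    · intro kst _ _ _
      simp [Vfun, Real.zero_rpow hα.ne']
    · intro kht _ _ h; exact absurd h (lt_irrefl 0)
  · -- 0 < W
    have habs : |W| = W := abs_of_pos hW
    have hV : Vfun α (At t) (Bt t) W = W ^ α * g t ks := by
      rw [Vfun, if_pos hW.le, hAeq]; ring
    have hnn : (0:ℝ) ≤ W ^ α := Real.rpow_nonneg hW.le α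
    refine ⟨⟨⟨ks * W, ?_, ?_, ?_⟩, ?_⟩, ?_, ?_⟩
    · rw [habs]; nlinarith [hks.1]
    · rw [habs]; nlinarith [hks.2]
    · rw [key_pos ks hW.le, hV]
    · rintro u ⟨v, hv1, hv2, rfl⟩
      rw [habs] at hv1 hv2
      have hzv : v = v / W * W := (div_mul_cancel₀ v hW.ne').symm
      have hz : v / W ∈ Icc A B :=
        ⟨(le_div_iff₀ hW).2 (by linarith), (div_le_iff₀ hW).2 (by linarith)⟩
      rw [hzv, key_pos (v / W) hW.le, hV]
      exact mul_le_mul_of_nonneg_left (hksmax hz) hnn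
    · intro kst hkst hkstmax hW0
      have heq : g t kst = g t ks := le_antisymm (hksmax hkst) (hkstmax ks hks)
      rw [key_pos kst hW0, heq, hV]
    · intro kht _ _ h; linarith
end
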